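/- Let μ be a centred probability measure on ℝ with distribution function F, let b < 0 < b̄, and define ρ₊(q) = sup{p ≤ F(b̄−) : m_p^q ≤ b̄} for q ∈ [F(b̄), 1]. Then it is impossible that simultaneously π* := ρ₊(1) = F(b) and F(b) > b̄/(b̄−b). (Equivalently: cases I and III of Theorem 2.2 are mutually exclusive.) -/

import Mathlib

open MeasureTheory Set Filter Topology

/-- Distribution function of `μ`. -/
noncomputable def distF (μ : Measure ℝ) (x : ℝ) : ℝ := (μ (Iic x)).toReal

/-- Left limit `F(x-)` of the distribution function. -/
noncomputable def distFm (μ : Measure ℝ) (x : ℝ) : ℝ := (μ (Iio x)).toReal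

/-- Quantile function of `μ`. -/
noncomputable def quantile (μ : Measure ℝ) (u : ℝ) : ℝ :=
  sInf {x : ℝ | u ≤ distF μ x}

/-- The sub-probability measure `μ_p^q`, i.e. `μ` restricted to its quantile range `(p,q]`,
realised as the image under the quantile function of Lebesgue measure on `(p,q]`. -/
noncomputable def qmeas (μ : Measure ℝ) (p q : ℝ) : Measure ℝ :=
  (volume.restrict (Ioc p q)).map (quantile μ)

/-- `m̃_p^q = ∫ x dμ_p^q`. -/
noncomputable def mtil (μ : Measure ℝ) (p q : ℝ) : ℝ :=
  ∫ u in Ioc p q, quantile μ u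

/-- The barycentre `m_p^q` of `μ` restricted to the quantile range `(p,q]`. -/
noncomputable def bary (μ : Measure ℝ) (p q : ℝ) : ℝ :=
  if p < q then (q - p)⁻¹ * mtil μ p q else quantile μ q

section Aux

variable {μ : Measure ℝ} [IsProbabilityMeasure μ]

lemma distF_mono : Monotone (distF μ) := fun a b hab =>
  ENNReal.toReal_mono (measure_ne_top _ _) (measure_mono (Iic_subset_Iic.2 hab))

lemma distF_le_one (x : ℝ) : distF μ x ≤ 1 := by
  have h : μ (Iic x) ≤ 1 := prob_le_one
  have := ENNReal.toReal_mono (by simp) h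
  simpa [distF] using this

lemma exists_distF_lt {u : ℝ} (hu : 0 < u) : ∃ z : ℝ, distF μ z < u := by
  have hanti : Antitone (fun n : ℕ => Iic (-(n : ℝ))) := fun m n hmn =>
    Iic_subset_Iic.2 (neg_le_neg (by exact_mod_cast hmn))
  have h := tendsto_measure_iInter_atTop (μ := μ) (s := fun n : ℕ => Iic (-(n : ℝ)))
    (fun _ => nullMeasurableSet_Iic) hanti ⟨0, measure_ne_top _ _⟩
  have hempty : (⋂ n : ℕ, Iic (-(n : ℝ))) = ∅ := by
    ext x
    simp only [mem_iInter, mem_Iic, mem_empty_iff_false, iff_false]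
    push_neg
    obtain ⟨n, hn⟩ := exists_nat_gt (-x)
    exact ⟨n, by linarith⟩
  rw [hempty, measure_empty] at h
  have h2 : Tendsto (fun n : ℕ => distF μ (-(n : ℝ))) atTop (𝓝 0) := by
    have := (ENNReal.tendsto_toReal ENNReal.zero_ne_top).comp h
    simpa [distF, Function.comp_def] using this
  obtain ⟨n, hn⟩ := (h2.eventually (eventually_lt_nhds hu)).exists
  exact ⟨-(n : ℝ), hn⟩

lemma bddBelow_quantile_set {u : ℝ} (hu : 0 < u) : BddBelow {x : ℝ | u ≤ distF μ x} := by
  obtain ⟨z, hz⟩ := exists_distF_lt (μ := μ) hu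
  refine ⟨z, fun y hy => ?_⟩
  by_contra hyz
  push_neg at hyz
  exact absurd (hy.trans (distF_mono hyz.le)) (not_le.2 hz)

lemma quantile_le_of_le {u x : ℝ} (hu : 0 < u) (hux : u ≤ distF μ x) : quantile μ u ≤ x :=
  csInf_le (bddBelow_quantile_set hu) hux

lemma le_distF_quantile {u : ℝ} (hu : 0 < u) (hne : ∃ x, u ≤ distF μ x) :
    u ≤ distF μ (quantile μ u) := by
  set S := {x : ℝ | u ≤ distF μ x} with hS
  have hbdd : BddBelow S := bddBelow_quantile_set hu
  have hnon : S.Nonempty := hne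
  set q := sInf S with hq
  have hmem : ∀ n : ℕ, q + 1 / (n + 1) ∈ S := by
    intro n
    have hpos : (0 : ℝ) < 1 / (n + 1) := by positivity
    obtain ⟨s, hsS, hslt⟩ := (csInf_lt_iff hbdd hnon).1 (by linarith [hq ▸ lt_add_of_pos_right q hpos] : q < q + 1 / (n + 1))
    exact hsS.trans (distF_mono hslt.le)
  have hInter : (⋂ n : ℕ, Iic (q + 1 / (n + 1))) = Iic q := by
    ext x
    simp only [mem_iInter, mem_Iic]
    constructor
    · intro hx
      by_contra hxq
      push_neg at hxq
      obtain ⟨n, hn⟩ := exists_nat_one_div_lt (sub_pos.2 hxq)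
      have := hx n
      push_cast at hn ⊢
      linarith
    · intro hx n
      have hpos : (0 : ℝ) < 1 / (n + 1) := by positivity
      linarith
  have hanti : Antitone (fun n : ℕ => Iic (q + 1 / ((n : ℝ) + 1))) := by
    intro m n hmn
    apply Iic_subset_Iic.2
    have : (1 : ℝ) / (n + 1) ≤ 1 / (m + 1) := by
      apply one_div_le_one_div_of_le (by positivity)
      exact_mod_cast by omega
    linarith
  have h := tendsto_measure_iInter_atTop (μ := μ) (s := fun n : ℕ => Iic (q + 1 / (n + 1)))
    (fun _ => nullMeasurableSet_Iic) hanti ⟨0, measure_ne_top _ _⟩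
  rw [hInter] at h
  have hlow : ∀ n : ℕ, ENNReal.ofReal u ≤ μ (Iic (q + 1 / (n + 1))) := by
    intro n
    have := hmem n
    rw [hS, mem_setOf_eq] at this
    exact ENNReal.ofReal_le_of_le_toReal this
  have hlim : ENNReal.ofReal u ≤ μ (Iic q) := ge_of_tendsto' h hlow
  have := (ENNReal.ofReal_le_iff_le_toReal (measure_ne_top _ _)).1 hlim
  simpa [distF, quantile, hq, hS] using this

lemma quantile_monoOn : MonotoneOn (quantile μ) (Ioo (0 : ℝ) 1) := by
  intro a ha b hb hab
  apply csInf_le_csInf (bddBelow_quantile_set ha.1)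
  · obtain ⟨x, hx⟩ : ∃ x, b ≤ distF μ x := by
      have h := tendsto_measure_Iic_atTop (μ := μ)
      have h2 : Tendsto (fun x : ℝ => distF μ x) atTop (𝓝 1) := by
        have := (ENNReal.tendsto_toReal (by simp : (μ univ) ≠ ⊤)).comp h
        simpa [distF, Function.comp_def] using this
      obtain ⟨x, hx⟩ := (h2.eventually (eventually_gt_nhds hb.2)).exists
      exact ⟨x, hx.le⟩
    exact ⟨x, hx⟩
  · exact fun x hx => hab.trans hx

lemma map_quantile : (volume.restrict (Ioc (0 : ℝ) 1)).map (quantile μ) = μ := by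
  have hrestr : volume.restrict (Ioc (0 : ℝ) 1) = volume.restrict (Ioo (0 : ℝ) 1) :=
    (Measure.restrict_congr_set Ioo_ae_eq_Ioc).symm
  rw [hrestr]
  have hmeas : AEMeasurable (quantile μ) (volume.restrict (Ioo (0 : ℝ) 1)) :=
    aemeasurable_restrict_of_monotoneOn measurableSet_Ioo quantile_monoOn
  symm
  refine Measure.ext_of_Iic μ _ (fun x => ?_)
  rw [Measure.map_apply_of_aemeasurable hmeas measurableSet_Iic,
    Measure.restrict_apply' measurableSet_Ioo]
  have hkey : quantile μ ⁻¹' Iic x ∩ Ioo 0 1 = Iic (distF μ x) ∩ Ioo 0 1 := by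
    ext u
    simp only [mem_inter_iff, mem_preimage, mem_Iic, mem_Ioo, and_congr_left_iff]
    intro hu
    constructor
    · intro hle
      have h1 : u ≤ distF μ (quantile μ u) := by
        apply le_distF_quantile hu.1
        have h := tendsto_measure_Iic_atTop (μ := μ)
        have h2 : Tendsto (fun x : ℝ => distF μ x) atTop (𝓝 1) := by
          have := (ENNReal.tendsto_toReal (by simp : (μ univ) ≠ ⊤)).comp h
          simpa [distF, Function.comp_def] using this
        obtain ⟨y, hy⟩ := (h2.eventually (eventually_gt_nhds hu.2)).exists
        exact ⟨y, hy.le⟩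
      exact h1.trans (distF_mono hle)
    · intro hle
      exact quantile_le_of_le hu.1 hle
  rw [hkey]
  have h0 : 0 ≤ distF μ x := ENNReal.toReal_nonneg
  have h1 : distF μ x ≤ 1 := distF_le_one x
  rcases eq_or_lt_of_le h1 with h1' | h1'
  · have : Iic (distF μ x) ∩ Ioo (0 : ℝ) 1 = Ioo 0 1 := by
      apply inter_eq_self_of_subset_right
      intro u hu
      simp only [mem_Iic]
      rw [h1']
      exact hu.2.le
    rw [this, Real.volume_Ioo]
    simp [distF, ← h1', ENNReal.ofReal_toReal (measure_ne_top μ _)]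
  · have : Iic (distF μ x) ∩ Ioo (0 : ℝ) 1 = Ioc 0 (distF μ x) := by
      ext u
      simp only [mem_inter_iff, mem_Iic, mem_Ioo, mem_Ioc]
      constructor
      · rintro ⟨h, h', _⟩; exact ⟨h', h⟩
      · rintro ⟨h, h'⟩; exact ⟨h', h, lt_of_le_of_lt h' h1'⟩
    rw [this, Real.volume_Ioc]
    simp [distF, ENNReal.ofReal_toReal (measure_ne_top μ _)]

end Aux

theorem stmt8 (μ : Measure ℝ) [IsProbabilityMeasure μ]
    (hint : Integrable id μ) (hcent : ∫ x, x ∂μ = 0)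
    (hne : μ ≠ Measure.dirac 0) (lb ub : ℝ) (hlb : lb < 0) (hub : 0 < ub) :
    ¬ (bary μ (distF μ lb) 1 = ub ∧ ub / (ub - lb) < distF μ lb) := by
  rintro ⟨hb, hq⟩
  set p := distF μ lb with hp
  have hp1 : p ≤ 1 := distF_le_one lb
  have hublb : (0 : ℝ) < ub - lb := by linarith
  have hppos : 0 < p := lt_trans (div_pos hub hublb) hq
  have hqle : ∀ u ∈ Ioc (0 : ℝ) p, quantile μ u ≤ lb := fun u hu =>
    quantile_le_of_le hu.1 hu.2
  by_cases hplt : p < 1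
  · -- main case
    have hmap : (volume.restrict (Ioc (0 : ℝ) 1)).map (quantile μ) = μ := map_quantile
    have hmeas : AEMeasurable (quantile μ) (volume.restrict (Ioc (0 : ℝ) 1)) := by
      rw [(Measure.restrict_congr_set Ioo_ae_eq_Ioc).symm]
      exact aemeasurable_restrict_of_monotoneOn measurableSet_Ioo quantile_monoOn
    have hintq : IntegrableOn (quantile μ) (Ioc (0 : ℝ) 1) volume := by
      have h := hint
      rw [← hmap] at h
      exact (integrable_map_measure aestronglyMeasurable_id hmeas).mp h
    have hzero : ∫ u in Ioc (0 : ℝ) 1, quantile μ u = 0 := by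
      have h : ∫ x, id x ∂((volume.restrict (Ioc (0 : ℝ) 1)).map (quantile μ)) = 0 := by
        rw [hmap]; simpa using hcent
      rwa [integral_map hmeas aestronglyMeasurable_id] at h
    have hint1 : IntegrableOn (quantile μ) (Ioc (0 : ℝ) p) volume :=
      hintq.mono_set (Ioc_subset_Ioc_right hp1)
    have hint2 : IntegrableOn (quantile μ) (Ioc p 1) volume :=
      hintq.mono_set (Ioc_subset_Ioc_left hppos.le)
    have hsplit : (∫ u in Ioc (0 : ℝ) p, quantile μ u) + ∫ u in Ioc p 1, quantile μ u = 0 := by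
      have hsp := setIntegral_union (f := quantile μ) (μ := volume)
        (Ioc_disjoint_Ioc_of_le le_rfl) measurableSet_Ioc hint1 hint2
      rw [Ioc_union_Ioc_eq_Ioc hppos.le hp1, hzero] at hsp
      exact hsp.symm
    have h1 : ∫ u in Ioc (0 : ℝ) p, quantile μ u ≤ p * lb := by
      have hle : ∫ u in Ioc (0 : ℝ) p, quantile μ u ≤ ∫ _ in Ioc (0 : ℝ) p, lb :=
        setIntegral_mono_on hint1 (integrableOn_const measure_Ioc_lt_top.ne) measurableSet_Ioc hqle
      rw [setIntegral_const, measureReal_def, Real.volume_Ioc, smul_eq_mul] at hle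
      rwa [ENNReal.toReal_ofReal (by linarith), sub_zero] at hle
    have h2 : ∫ u in Ioc p 1, quantile μ u = (1 - p) * ub := by
      have hb' : (1 - p)⁻¹ * mtil μ p 1 = ub := by
        rw [bary, if_pos hplt] at hb; exact hb
      have h1p : (1 : ℝ) - p ≠ 0 := by linarith
      rw [mtil] at hb'
      field_simp at hb'
      linarith [hb']
    have hlt : ub < p * (ub - lb) := (div_lt_iff₀ hublb).1 hq
    nlinarith [hsplit, h1, h2]
  · -- p = 1
    have hp1' : p = 1 := le_antisymm hp1 (not_lt.1 hplt)
    have hbary : bary μ p 1 = quantile μ 1 := by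
      rw [bary, if_neg hplt]
    have hqle1 : quantile μ 1 ≤ lb := quantile_le_of_le one_pos (hp1' ▸ le_refl p)
    rw [hbary] at hb
    linarith
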